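/- Let X be a paracompact Hausdorff space, Y a Banach space, and T : X → Set Y a lower semicontinuous multifunction with nonempty closed convex values. Then T has a continuous selection: there is a continuous g : X → Y with g(x) ∈ T(x) for all x. -/

import Mathlib

open Metric Filter Topology

/-- One approximation step for the Michael selection theorem. -/
private lemma michael_step
    {X : Type*} [TopologicalSpace X] [ParacompactSpace X] [T2Space X]
    {Y : Type*} [NormedAddCommGroup Y] [NormedSpace ℝ Y]
    (T : X → Set Y)
    (hlsc : ∀ V : Set Y, IsOpen V → IsOpen {x : X | (T x ∩ V).Nonempty})
    (hne : ∀ x, (T x).Nonempty)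
    (hconv : ∀ x, Convex ℝ (T x))
    (f₀ : C(X, Y)) (n : ℕ)
    (hf₀ : ∀ x, Metric.infDist (f₀ x) (T x) < (1/2 : ℝ) ^ n) :
    ∃ f₁ : C(X, Y), (∀ x, Metric.infDist (f₁ x) (T x) < (1/2 : ℝ) ^ (n+1)) ∧
      ∀ x, dist (f₁ x) (f₀ x) < 3 * (1/2 : ℝ) ^ (n+1) := by
  set ε : ℝ := (1/2 : ℝ) ^ n
  set ε' : ℝ := (1/2 : ℝ) ^ (n+1)
  have hε' : 0 < ε' := by positivity
  have hεε' : ε + ε' = 3 * ε' := by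
    have : ε = 2 * ε' := by
      simp only [ε, ε', pow_succ]
      ring
    rw [this]; ring
  have := exists_continuous_forall_mem_convex_of_local_const
    (t := fun x => Metric.thickening ε' (T x) ∩ Metric.ball (f₀ x) (ε + ε'))
    (fun x => ((hconv x).thickening ε').inter (convex_ball _ _))
    (fun x₀ => by
      obtain ⟨z, hz, hdz⟩ := (Metric.infDist_lt_iff (hne x₀)).mp (hf₀ x₀)
      refine ⟨z, ?_⟩
      have h1 : ∀ᶠ y in 𝓝 x₀, (T y ∩ Metric.ball z ε').Nonempty := by
        have := (hlsc (Metric.ball z ε') Metric.isOpen_ball)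
        exact this.mem_nhds ⟨z, hz, by simp [hε']⟩
      have h2 : ∀ᶠ y in 𝓝 x₀, dist (f₀ x₀) (f₀ y) < ε' := by
        have : Tendsto (fun y => dist (f₀ x₀) (f₀ y)) (𝓝 x₀) (𝓝 0) := by
          simpa [dist_comm] using
            (f₀.continuous.tendsto x₀).dist (tendsto_const_nhds (x := f₀ x₀))
        exact this.eventually_lt_const hε'
      filter_upwards [h1, h2] with y hy hyd
      obtain ⟨w, hw, hwz⟩ := hy
      refine ⟨Metric.mem_thickening_iff.mpr ⟨w, hw, by simpa [dist_comm] using hwz⟩, ?_⟩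
      rw [Metric.mem_ball]
      calc dist z (f₀ y) ≤ dist z (f₀ x₀) + dist (f₀ x₀) (f₀ y) := dist_triangle _ _ _
        _ < ε + ε' := add_lt_add (by simpa [dist_comm] using hdz) hyd)
  obtain ⟨g, hg⟩ := this
  refine ⟨g, fun x => ?_, fun x => ?_⟩
  · obtain ⟨w, hw, hwd⟩ := Metric.mem_thickening_iff.mp (hg x).1
    exact lt_of_le_of_lt (Metric.infDist_le_dist_of_mem hw) hwd
  · have := (hg x).2
    rw [Metric.mem_ball] at this
    rw [hεε'] at this
    exact this

theorem michael_selection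
    {X : Type*} [TopologicalSpace X] [ParacompactSpace X] [T2Space X]
    {Y : Type*} [NormedAddCommGroup Y] [NormedSpace ℝ Y] [CompleteSpace Y]
    (T : X → Set Y)
    (hlsc : ∀ V : Set Y, IsOpen V → IsOpen {x : X | (T x ∩ V).Nonempty})
    (hne : ∀ x, (T x).Nonempty)
    (hclosed : ∀ x, IsClosed (T x))
    (hconv : ∀ x, Convex ℝ (T x)) :
    ∃ g : X → Y, Continuous g ∧ ∀ x, g x ∈ T x := by
  -- base approximation
  have base : ∃ f : C(X, Y), ∀ x, Metric.infDist (f x) (T x) < (1/2 : ℝ) ^ 0 := by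
    have := exists_continuous_forall_mem_convex_of_local_const
      (t := fun x => Metric.thickening 1 (T x))
      (fun x => (hconv x).thickening 1)
      (fun x₀ => by
        obtain ⟨z, hz⟩ := hne x₀
        refine ⟨z, ?_⟩
        have h1 : ∀ᶠ y in 𝓝 x₀, (T y ∩ Metric.ball z 1).Nonempty :=
          (hlsc (Metric.ball z 1) Metric.isOpen_ball).mem_nhds ⟨z, hz, by simp⟩
        filter_upwards [h1] with y hy
        obtain ⟨w, hw, hwz⟩ := hy
        exact Metric.mem_thickening_iff.mpr ⟨w, hw, by simpa [dist_comm] using hwz⟩)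
    obtain ⟨f, hf⟩ := this
    refine ⟨f, fun x => ?_⟩
    obtain ⟨w, hw, hwd⟩ := Metric.mem_thickening_iff.mp (hf x)
    simpa using lt_of_le_of_lt (Metric.infDist_le_dist_of_mem hw) hwd
  -- build the sequence
  let F : ∀ n : ℕ, {f : C(X, Y) // ∀ x, Metric.infDist (f x) (T x) < (1/2 : ℝ) ^ n} :=
    fun n => Nat.rec ⟨base.choose, base.choose_spec⟩
      (fun n p => ⟨(michael_step T hlsc hne hconv p.1 n p.2).choose,
        (michael_step T hlsc hne hconv p.1 n p.2).choose_spec.1⟩) n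
  have hFd : ∀ n x, dist ((F (n+1)).1 x) ((F n).1 x) < 3 * (1/2 : ℝ) ^ (n+1) :=
    fun n => (michael_step T hlsc hne hconv (F n).1 n (F n).2).choose_spec.2
  -- the sequence is uniformly Cauchy
  have hgeom : ∀ x n, dist ((F n).1 x) ((F (n+1)).1 x) ≤ (3/2 : ℝ) * (1/2 : ℝ) ^ n := by
    intro x n
    have := (hFd n x).le
    rw [dist_comm] at this
    calc dist ((F n).1 x) ((F (n+1)).1 x) ≤ 3 * (1/2 : ℝ) ^ (n+1) := this
      _ = (3/2 : ℝ) * (1/2 : ℝ) ^ n := by ring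
  have hcauchy : ∀ x, CauchySeq (fun n => (F n).1 x) := fun x =>
    cauchySeq_of_le_geometric (1/2 : ℝ) (3/2 : ℝ) (by norm_num) (hgeom x)
  have hlim : ∀ x, ∃ y, Tendsto (fun n => (F n).1 x) atTop (𝓝 y) :=
    fun x => cauchySeq_tendsto_of_complete (hcauchy x)
  choose g hg using hlim
  have hdg : ∀ x n, dist ((F n).1 x) (g x) ≤ 3 * (1/2 : ℝ) ^ n := by
    intro x n
    have := dist_le_of_le_geometric_of_tendsto (1/2 : ℝ) (3/2 : ℝ) (by norm_num)
      (hgeom x) (hg x) n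
    calc dist ((F n).1 x) (g x) ≤ (3/2 : ℝ) * (1/2 : ℝ) ^ n / (1 - 1/2) := this
      _ = 3 * (1/2 : ℝ) ^ n := by ring
  -- uniform convergence ⇒ continuity
  have hunif : TendstoUniformly (fun n x => (F n).1 x) g atTop := by
    rw [Metric.tendstoUniformly_iff]
    intro δ hδ
    have h3 : Tendsto (fun n : ℕ => 3 * (1/2 : ℝ) ^ n) atTop (𝓝 0) := by
      simpa using (tendsto_pow_atTop_nhds_zero_of_lt_one (by norm_num)
        (by norm_num : (1/2 : ℝ) < 1)).const_mul 3
    filter_upwards [h3.eventually_lt_const hδ] with n hn x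
    rw [dist_comm]
    exact lt_of_le_of_lt (hdg x n) hn
  have hgc : Continuous g := hunif.continuous (Eventually.of_forall fun n => (F n).1.continuous).frequently
  refine ⟨g, hgc, fun x => ?_⟩
  rw [← (hclosed x).closure_eq, Metric.mem_closure_iff_infDist_zero (hne x)]
  have hle : ∀ n : ℕ, Metric.infDist (g x) (T x) ≤ 4 * (1/2 : ℝ) ^ n := by
    intro n
    calc Metric.infDist (g x) (T x)
        ≤ Metric.infDist ((F n).1 x) (T x) + dist (g x) ((F n).1 x) :=
          Metric.infDist_le_infDist_add_dist
      _ ≤ (1/2 : ℝ) ^ n + 3 * (1/2 : ℝ) ^ n :=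
          add_le_add ((F n).2 x).le (by rw [dist_comm]; exact hdg x n)
      _ = 4 * (1/2 : ℝ) ^ n := by ring
  have h0 : Metric.infDist (g x) (T x) ≤ 0 := by
    have h4 : Tendsto (fun n : ℕ => 4 * (1/2 : ℝ) ^ n) atTop (𝓝 0) := by
      simpa using (tendsto_pow_atTop_nhds_zero_of_lt_one (by norm_num)
        (by norm_num : (1/2 : ℝ) < 1)).const_mul 4
    exact le_of_tendsto_of_tendsto tendsto_const_nhds h4
      (Eventually.of_forall hle)
  exact le_antisymm h0 Metric.infDist_nonneg
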